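/- Let n be a positive integer and let a, b be reals with 0 < b < a < n. Let m₁, m₃ be positive integers with m₁ ≤ m₃, set β := m₃/n, α := m₁/n and γ := α/β = m₁/m₃, and assume β ≤ 1. Let B₁ ~ Binomial(m₁, a/n), B₂ ~ Binomial(m₃ − m₁, b/n), and B₃ ~ Binomial(m₃, b/n) be independent random variables, and set X := B₁ + B₂ − B₃ (an integer-valued random variable). Define ã := a^γ · b^{1−γ}, b̃ := b, C̃ := (√ã − √b̃)², and R(p,q) := p(1−q)/(q(1−p)) for p, q ∈ (0,1). Then for every real θ, Pr[X ≤ θ] ≤ exp(−β·C̃ + (θ/2)·log R(ã/n, b̃/n)). -/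

import Mathlib

set_option autoImplicit false
set_option maxHeartbeats 1000000

open MeasureTheory ProbabilityTheory
open scoped ENNReal

lemma binom_mgf (m : ℕ) {p r : ℝ} (hp0 : 0 ≤ p) (hp1 : p ≤ 1) (hr : 0 ≤ r) :
    ∑' j : ℕ, ENNReal.ofReal (r ^ j) *
        ENNReal.ofReal ((m.choose j : ℝ) * p ^ j * (1 - p) ^ (m - j))
      = ENNReal.ofReal ((1 - p + p * r) ^ m) := by
  have h1p : (0:ℝ) ≤ 1 - p := by linarith
  have key : ∀ j : ℕ, ENNReal.ofReal (r ^ j) *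
      ENNReal.ofReal ((m.choose j : ℝ) * p ^ j * (1 - p) ^ (m - j))
      = ENNReal.ofReal ((p*r) ^ j * (1 - p) ^ (m - j) * (m.choose j : ℝ)) := by
    intro j
    rw [← ENNReal.ofReal_mul (by positivity)]
    congr 1; ring
  simp_rw [key]
  rw [tsum_eq_sum (s := Finset.range (m+1)) ?_]
  · rw [← ENNReal.ofReal_sum_of_nonneg (fun j _ => by positivity)]
    congr 1
    rw [← add_pow]
    ring_nf
  · intro j hj
    have : m.choose j = 0 := Nat.choose_eq_zero_of_lt (by simpa using hj)
    simp [this]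

lemma lintegral_triple {Ω : Type*} [MeasurableSpace Ω] (μ : Measure Ω)
    (B₁ B₂ B₃ : Ω → ℕ) (hmeas₁ : Measurable B₁) (hmeas₂ : Measurable B₂) (hmeas₃ : Measurable B₃)
    (hindep : iIndepFun ![B₁, B₂, B₃] μ)
    (g₁ g₂ g₃ : ℕ → ℝ≥0∞) :
    ∫⁻ ω, g₁ (B₁ ω) * g₂ (B₂ ω) * g₃ (B₃ ω) ∂μ =
      (∑' i, g₁ i * μ {ω | B₁ ω = i}) * ((∑' j, g₂ j * μ {ω | B₂ ω = j}) *
        (∑' k, g₃ k * μ {ω | B₃ ω = k})) := by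
  set T : Ω → ℕ × ℕ × ℕ := fun ω => (B₁ ω, B₂ ω, B₃ ω) with hT
  have hTmeas : Measurable T := hmeas₁.prodMk (hmeas₂.prodMk hmeas₃)
  set G : ℕ × ℕ × ℕ → ℝ≥0∞ := fun x => g₁ x.1 * g₂ x.2.1 * g₃ x.2.2 with hG
  have hjoint : ∀ i j k : ℕ, μ.map T {(i, j, k)} =
      μ {ω | B₁ ω = i} * (μ {ω | B₂ ω = j} * μ {ω | B₃ ω = k}) := by
    intro i j k
    rw [Measure.map_apply hTmeas (measurableSet_singleton _)]
    have h := hindep.measure_inter_preimage_eq_mul (S := Finset.univ)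
      (sets := ![{i}, {j}, {k}])
      (by intro t _; fin_cases t <;> exact measurableSet_singleton _)
    have hl : T ⁻¹' {(i, j, k)} =
        ⋂ t ∈ Finset.univ, (![B₁, B₂, B₃] t) ⁻¹' (![({i} : Set ℕ), {j}, {k}] t) := by
      ext ω
      simp [Fin.forall_fin_succ, T, Prod.ext_iff]
    rw [hl, h, Fin.prod_univ_three]
    have e : ∀ (f : Ω → ℕ) (i : ℕ), f ⁻¹' {i} = {ω | f ω = i} := fun f i => rfl
    simp only [Matrix.cons_val_zero, Matrix.cons_val_one, Matrix.head_cons,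
      Matrix.cons_val_two, Matrix.tail_cons, e]
    ring
  calc ∫⁻ ω, g₁ (B₁ ω) * g₂ (B₂ ω) * g₃ (B₃ ω) ∂μ
      = ∫⁻ x, G x ∂(μ.map T) := by
        rw [lintegral_map (by exact measurable_of_countable G) hTmeas]
    _ = ∑' x : ℕ × ℕ × ℕ, G x * μ.map T {x} := lintegral_countable' G
    _ = ∑' i, ∑' j, ∑' k, (g₁ i * μ {ω | B₁ ω = i}) *
          ((g₂ j * μ {ω | B₂ ω = j}) * (g₃ k * μ {ω | B₃ ω = k})) := by
        rw [ENNReal.tsum_prod']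
        congr 1; ext i
        rw [ENNReal.tsum_prod']
        congr 1; ext j
        congr 1; ext k
        rw [hjoint i j k]
        simp only [G]
        ring
    _ = _ := by
        simp_rw [ENNReal.tsum_mul_left, ENNReal.tsum_mul_right]

lemma core_bound {p q : ℝ} (hq0 : 0 < q) (hqp : q < p) (hp1 : p < 1) :
    (1 - p + p * Real.sqrt (q * (1 - p) / (p * (1 - q)))) *
      (1 - q + q / Real.sqrt (q * (1 - p) / (p * (1 - q)))) ≤
    Real.exp (-(Real.sqrt p - Real.sqrt q) ^ 2) := by
  have hp0 : 0 < p := hq0.trans hqp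
  have hq1 : q < 1 := hqp.trans hp1
  set α := Real.sqrt p with hα
  set β := Real.sqrt q with hβ
  set α' := Real.sqrt (1 - p) with hα'
  set β' := Real.sqrt (1 - q) with hβ'
  have hαp : 0 < α := Real.sqrt_pos.2 hp0
  have hβp : 0 < β := Real.sqrt_pos.2 hq0
  have hα'p : 0 < α' := Real.sqrt_pos.2 (by linarith)
  have hβ'p : 0 < β' := Real.sqrt_pos.2 (by linarith)
  have hαsq : α ^ 2 = p := Real.sq_sqrt hp0.le
  have hβsq : β ^ 2 = q := Real.sq_sqrt hq0.le
  have hα'sq : α' ^ 2 = 1 - p := Real.sq_sqrt (by linarith)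
  have hβ'sq : β' ^ 2 = 1 - q := Real.sq_sqrt (by linarith)
  have hu : Real.sqrt (q * (1 - p) / (p * (1 - q))) = β * α' / (α * β') := by
    have h1 : q * (1 - p) / (p * (1 - q)) = (β * α' / (α * β')) ^ 2 := by
      rw [show (1:ℝ) - p = α' ^ 2 from hα'sq.symm, show (1:ℝ) - q = β' ^ 2 from hβ'sq.symm,
        show p = α ^ 2 from hαsq.symm, show q = β ^ 2 from hβsq.symm]
      field_simp
    rw [h1, Real.sqrt_sq (by positivity)]
  rw [hu]
  have hprod : (1 - p + p * (β * α' / (α * β'))) * (1 - q + q / (β * α' / (α * β')))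
      = (α * β + α' * β') ^ 2 := by
    rw [show (1:ℝ) - p = α' ^ 2 from hα'sq.symm, show (1:ℝ) - q = β' ^ 2 from hβ'sq.symm,
      show p = α ^ 2 from hαsq.symm, show q = β ^ 2 from hβsq.symm]
    field_simp; ring
  rw [hprod]
  set S := α * β + α' * β' with hS
  set D := (α - β) ^ 2 with hD
  have hSid : 2 * S = 2 - D - (α' - β') ^ 2 := by
    simp only [hS, hD]; linear_combination hαsq + hβsq + hα'sq + hβ'sq
  have hSle : S ≤ 1 - D / 2 := by nlinarith [sq_nonneg (α' - β')]
  have hS0 : 0 ≤ S := by positivity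
  have h1D : 0 ≤ 1 - D / 2 := le_trans hS0 hSle
  have hexp : 1 - D / 2 ≤ Real.exp (-(D / 2)) := by
    have := Real.add_one_le_exp (-(D / 2)); linarith
  calc S ^ 2 ≤ (1 - D / 2) ^ 2 := pow_le_pow_left₀ hS0 hSle 2
    _ ≤ Real.exp (-(D / 2)) ^ 2 := pow_le_pow_left₀ h1D hexp 2
    _ = Real.exp (-D) := by
        rw [sq, ← Real.exp_add]; ring_nf

lemma chain_bound {p₁ q γ s : ℝ} (hq0 : 0 < q) (hqp : q ≤ p₁) (hp1 : p₁ < 1)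
    (hγ0 : 0 ≤ γ) (hγ1 : γ ≤ 1) (hs0 : 0 ≤ s) (hs1 : s ≤ 1) :
    (1 - p₁ + p₁ * s) ^ γ * (1 - q + q * s) ^ (1 - γ) ≤
      1 - p₁ ^ γ * q ^ (1 - γ) + p₁ ^ γ * q ^ (1 - γ) * s := by
  have hp0 : 0 < p₁ := lt_of_lt_of_le hq0 hqp
  have hA₁ : 0 ≤ 1 - p₁ + p₁ * s := by nlinarith
  have hA₂ : 0 ≤ 1 - q + q * s := by nlinarith
  have h1 := Real.geom_mean_le_arith_mean2_weighted (w₁ := γ) (w₂ := 1 - γ)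
    hγ0 (by linarith) hA₁ hA₂ (by ring)
  have h2 := Real.geom_mean_le_arith_mean2_weighted (w₁ := γ) (w₂ := 1 - γ)
    hγ0 (by linarith) hp0.le hq0.le (by ring)
  nlinarith [mul_le_mul_of_nonneg_left h2 (by linarith : (0:ℝ) ≤ 1 - s)]


/-- Let `B₁ ~ Binom(m₁, a/n)`, `B₂ ~ Binom(m₃ − m₁, b/n)`,
`B₃ ~ Binom(m₃, b/n)` be mutually independent, `X := B₁ + B₂ − B₃`,
`β := m₃/n`, `γ := m₁/m₃`, `ã := a^γ b^{1−γ}`, `C̃ := (√ã − √b)²`,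
`R(p,q) := p(1−q)/(q(1−p))`. Then for every real `θ`,
`Pr[X ≤ θ] ≤ exp(−βC̃ + (θ/2)·log R(ã/n, b/n))`.
The binomial laws are encoded by the pointwise probability mass function. -/
theorem stmt_1 {Ω : Type*} [MeasurableSpace Ω] (μ : Measure Ω) [IsProbabilityMeasure μ]
    (n : ℕ) (hn : 0 < n) (a b : ℝ) (hb0 : 0 < b) (hba : b < a) (han : a < n)
    (m₁ m₃ : ℕ) (hm₁ : 0 < m₁) (hm₁₃ : m₁ ≤ m₃) (hβ : (m₃ : ℝ) / n ≤ 1)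
    (B₁ B₂ B₃ : Ω → ℕ)
    (hmeas₁ : Measurable B₁) (hmeas₂ : Measurable B₂) (hmeas₃ : Measurable B₃)
    (hlaw₁ : ∀ j : ℕ, μ {ω | B₁ ω = j} =
      ENNReal.ofReal ((m₁.choose j : ℝ) * (a / n) ^ j * (1 - a / n) ^ (m₁ - j)))
    (hlaw₂ : ∀ j : ℕ, μ {ω | B₂ ω = j} =
      ENNReal.ofReal (((m₃ - m₁).choose j : ℝ) * (b / n) ^ j * (1 - b / n) ^ (m₃ - m₁ - j)))
    (hlaw₃ : ∀ j : ℕ, μ {ω | B₃ ω = j} =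
      ENNReal.ofReal ((m₃.choose j : ℝ) * (b / n) ^ j * (1 - b / n) ^ (m₃ - j)))
    (hindep : iIndepFun ![B₁, B₂, B₃] μ)
    (θ : ℝ) :
    μ {ω | (B₁ ω : ℝ) + (B₂ ω : ℝ) - (B₃ ω : ℝ) ≤ θ} ≤
      ENNReal.ofReal (Real.exp
        (-(((m₃ : ℝ) / n) *
            (Real.sqrt (a ^ ((m₁ : ℝ) / m₃) * b ^ (1 - (m₁ : ℝ) / m₃)) - Real.sqrt b) ^ 2)
          + θ / 2 * Real.log
            (((a ^ ((m₁ : ℝ) / m₃) * b ^ (1 - (m₁ : ℝ) / m₃)) / n * (1 - b / n)) /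
              (b / n * (1 - (a ^ ((m₁ : ℝ) / m₃) * b ^ (1 - (m₁ : ℝ) / m₃)) / n))))) := by
  classical
  have hn0 : (0:ℝ) < n := by exact_mod_cast hn
  have ha0 : 0 < a := hb0.trans hba
  have hm₃ : 0 < m₃ := lt_of_lt_of_le hm₁ hm₁₃
  have hm₃0 : (0:ℝ) < (m₃:ℝ) := by exact_mod_cast hm₃
  set γ : ℝ := (m₁:ℝ) / (m₃:ℝ) with hγdef
  have hγ0 : 0 < γ := div_pos (by exact_mod_cast hm₁) hm₃0
  have hγ1 : γ ≤ 1 := by rw [hγdef, div_le_one hm₃0]; exact_mod_cast hm₁₃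
  set aT : ℝ := a ^ γ * b ^ (1 - γ) with haTdef
  have haT0 : 0 < aT := by
    have := Real.rpow_pos_of_pos ha0 γ
    have := Real.rpow_pos_of_pos hb0 (1 - γ)
    positivity
  have hbaT : b < aT := by
    have h1 : b ^ γ * b ^ (1-γ) = b := by
      rw [← Real.rpow_add hb0]; norm_num
    have h2 : b ^ γ < a ^ γ := Real.rpow_lt_rpow hb0.le hba hγ0
    have h3 : (0:ℝ) < b ^ (1-γ) := Real.rpow_pos_of_pos hb0 _
    calc b = b ^ γ * b ^ (1-γ) := h1.symm
      _ < a ^ γ * b ^ (1-γ) := mul_lt_mul_of_pos_right h2 h3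
  have haTa : aT ≤ a := by
    have h2 : b ^ (1-γ) ≤ a ^ (1-γ) := Real.rpow_le_rpow hb0.le hba.le (by linarith)
    have h4 : (0:ℝ) ≤ a ^ γ := (Real.rpow_pos_of_pos ha0 γ).le
    calc aT ≤ a ^ γ * a ^ (1-γ) := mul_le_mul_of_nonneg_left h2 h4
      _ = a := by rw [← Real.rpow_add ha0]; norm_num
  set q : ℝ := b / n with hqdef
  set pt : ℝ := aT / n with hptdef
  set p₁ : ℝ := a / n with hp₁def
  have hq0 : 0 < q := by positivity
  have hqpt : q < pt := by rw [hqdef, hptdef]; gcongr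
  have hpt1 : pt < 1 := by rw [hptdef, div_lt_one hn0]; linarith
  have hq1 : q < 1 := lt_trans hqpt hpt1
  have hpt0 : 0 < pt := hq0.trans hqpt
  have hqp₁ : q < p₁ := by rw [hqdef, hp₁def]; gcongr
  have hp₁1 : p₁ < 1 := by rw [hp₁def, div_lt_one hn0]; exact han
  have hp₁0 : 0 < p₁ := hq0.trans hqp₁
  have hpt_eq : pt = p₁ ^ γ * q ^ (1 - γ) := by
    rw [hptdef, hp₁def, hqdef, Real.div_rpow ha0.le hn0.le, Real.div_rpow hb0.le hn0.le,
      div_mul_div_comm, ← Real.rpow_add hn0, show γ + (1-γ) = 1 by ring, Real.rpow_one, haTdef]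
  set R : ℝ := pt * (1 - q) / (q * (1 - pt)) with hRdef
  have hR1 : 1 < R := by
    rw [hRdef, lt_div_iff₀ (by nlinarith)]
    nlinarith
  have hR0 : 0 < R := lt_trans one_pos hR1
  set t : ℝ := Real.log R / 2 with htdef
  have hlogR : 0 < Real.log R := Real.log_pos hR1
  have ht0 : 0 < t := by rw [htdef]; positivity
  set s : ℝ := Real.exp (-t) with hsdef
  have hs0 : 0 < s := Real.exp_pos _
  have hs1 : s < 1 := by
    rw [hsdef, Real.exp_lt_one_iff]; linarith
  have hs_eq : s = Real.sqrt (q * (1 - pt) / (pt * (1 - q))) := by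
    have hsq : s ^ 2 = q * (1 - pt) / (pt * (1 - q)) := by
      rw [hsdef, ← Real.exp_nat_mul,
        show ((2:ℕ):ℝ) * (-t) = - Real.log R by rw [htdef]; push_cast; ring,
        Real.exp_neg, Real.exp_log hR0, hRdef, inv_div]
    calc s = Real.sqrt (s ^ 2) := (Real.sqrt_sq hs0.le).symm
      _ = _ := by rw [hsq]
  -- the real analytic bound
  have hA₁0 : (0:ℝ) ≤ 1 - p₁ + p₁ * s := by nlinarith
  have hA₂0 : (0:ℝ) ≤ 1 - q + q * s := by nlinarith
  have hA₃0 : (0:ℝ) ≤ 1 - q + q * s⁻¹ := by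
    have : 0 < q * s⁻¹ := by positivity
    linarith
  have hAT0 : (0:ℝ) ≤ 1 - pt + pt * s := by nlinarith
  have key1 : (1 - p₁ + p₁ * s) ^ γ * (1 - q + q * s) ^ (1-γ) ≤ 1 - pt + pt * s := by
    have h := chain_bound hq0 hqp₁.le hp₁1 hγ0.le hγ1 hs0.le hs1.le
    rw [hpt_eq]; exact h
  have key2 : (1 - pt + pt * s) * (1 - q + q * s⁻¹) ≤
      Real.exp (-(Real.sqrt pt - Real.sqrt q) ^ 2) := by
    have h := core_bound hq0 hqpt hpt1
    rw [← hs_eq, div_eq_mul_inv] at h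
    exact h
  have hγm : γ * (m₃:ℝ) = (m₁:ℝ) := by
    rw [hγdef]; field_simp
  have hγm' : (1 - γ) * (m₃:ℝ) = ((m₃ - m₁ : ℕ):ℝ) := by
    rw [hγdef, Nat.cast_sub hm₁₃]; field_simp
  have pow1 : (1 - p₁ + p₁ * s) ^ m₁ * (1 - q + q * s) ^ (m₃ - m₁)
      = ((1 - p₁ + p₁ * s) ^ γ * (1 - q + q * s) ^ (1-γ)) ^ m₃ := by
    rw [mul_pow]
    congr 1
    · rw [← Real.rpow_natCast ((1 - p₁ + p₁ * s) ^ γ) m₃, ← Real.rpow_mul hA₁0, hγm,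
        Real.rpow_natCast]
    · rw [← Real.rpow_natCast ((1 - q + q * s) ^ (1-γ)) m₃, ← Real.rpow_mul hA₂0, hγm',
        Real.rpow_natCast]
  have MAIN : (1 - p₁ + p₁ * s) ^ m₁ * ((1 - q + q * s) ^ (m₃ - m₁) * (1 - q + q * s⁻¹) ^ m₃)
      ≤ Real.exp (-((m₃:ℝ)/n * (Real.sqrt aT - Real.sqrt b) ^ 2)) := by
    calc (1 - p₁ + p₁ * s) ^ m₁ * ((1 - q + q * s) ^ (m₃ - m₁) * (1 - q + q * s⁻¹) ^ m₃)
        = ((1 - p₁ + p₁ * s) ^ γ * (1 - q + q * s) ^ (1-γ)) ^ m₃ * (1 - q + q * s⁻¹) ^ m₃ := by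
          rw [← mul_assoc, pow1]
      _ ≤ (1 - pt + pt * s) ^ m₃ * (1 - q + q * s⁻¹) ^ m₃ :=
          mul_le_mul_of_nonneg_right (pow_le_pow_left₀ (by positivity) key1 m₃)
            (pow_nonneg hA₃0 _)
      _ = ((1 - pt + pt * s) * (1 - q + q * s⁻¹)) ^ m₃ := (mul_pow _ _ _).symm
      _ ≤ (Real.exp (-(Real.sqrt pt - Real.sqrt q) ^ 2)) ^ m₃ :=
          pow_le_pow_left₀ (mul_nonneg hAT0 hA₃0) key2 m₃
      _ = Real.exp ((m₃:ℕ) * (-(Real.sqrt pt - Real.sqrt q) ^ 2)) :=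
          (Real.exp_nat_mul _ _).symm
      _ = Real.exp (-((m₃:ℝ)/n * (Real.sqrt aT - Real.sqrt b) ^ 2)) := by
          congr 1
          rw [hptdef, hqdef, Real.sqrt_div haT0.le, Real.sqrt_div hb0.le, div_sub_div_same,
            div_pow, Real.sq_sqrt hn0.le]
          ring
  -- measure-theoretic part
  set g₁ : ℕ → ℝ≥0∞ := fun i => ENNReal.ofReal (s ^ i) with hg₁
  set g₂ : ℕ → ℝ≥0∞ := fun i => ENNReal.ofReal (s ^ i) with hg₂
  set g₃ : ℕ → ℝ≥0∞ := fun k => ENNReal.ofReal ((s⁻¹) ^ k) with hg₃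
  set f : Ω → ℝ≥0∞ := fun ω => g₁ (B₁ ω) * g₂ (B₂ ω) * g₃ (B₃ ω) with hfdef
  have hf : ∀ ω, ENNReal.ofReal (Real.exp (-(t * ((B₁ ω:ℝ) + (B₂ ω:ℝ) - (B₃ ω:ℝ))))) = f ω := by
    intro ω
    rw [hfdef]
    simp only [hg₁, hg₂, hg₃]
    rw [← ENNReal.ofReal_mul (by positivity), ← ENNReal.ofReal_mul (by positivity)]
    congr 1
    rw [hsdef, ← Real.exp_neg, ← Real.exp_nat_mul, ← Real.exp_nat_mul, ← Real.exp_nat_mul,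
      ← Real.exp_add, ← Real.exp_add]
    congr 1
    push_cast
    ring
  have hfm : Measurable f := by
    show Measurable ((fun ω => g₁ (B₁ ω)) * (fun ω => g₂ (B₂ ω)) * (fun ω => g₃ (B₃ ω)))
    apply Measurable.mul
    apply Measurable.mul
    · exact (measurable_of_countable g₁).comp hmeas₁
    · exact (measurable_of_countable g₂).comp hmeas₂
    · exact (measurable_of_countable g₃).comp hmeas₃
  have hint : ∫⁻ ω, f ω ∂μ =
      ENNReal.ofReal ((1 - p₁ + p₁ * s) ^ m₁) *
        (ENNReal.ofReal ((1 - q + q * s) ^ (m₃ - m₁)) *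
          ENNReal.ofReal ((1 - q + q * s⁻¹) ^ m₃)) := by
    rw [hfdef]
    rw [lintegral_triple μ B₁ B₂ B₃ hmeas₁ hmeas₂ hmeas₃ hindep g₁ g₂ g₃]
    congr 1
    · simp_rw [hlaw₁]
      exact binom_mgf m₁ hp₁0.le hp₁1.le hs0.le
    congr 1
    · simp_rw [hlaw₂]
      exact binom_mgf (m₃ - m₁) hq0.le hq1.le hs0.le
    · simp_rw [hlaw₃]
      exact binom_mgf m₃ hq0.le hq1.le (by positivity)
  set ε : ℝ≥0∞ := ENNReal.ofReal (Real.exp (-(t * θ))) with hεdef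
  have hε0 : ε ≠ 0 := (ENNReal.ofReal_pos.2 (Real.exp_pos _)).ne'
  have hεtop : ε ≠ ⊤ := ENNReal.ofReal_ne_top
  have hsub : {ω | (B₁ ω : ℝ) + (B₂ ω : ℝ) - (B₃ ω : ℝ) ≤ θ} ⊆ {ω | ε ≤ f ω} := by
    intro ω hω
    simp only [Set.mem_setOf_eq] at hω ⊢
    rw [← hf ω, hεdef]
    apply ENNReal.ofReal_le_ofReal
    apply Real.exp_le_exp.2
    have := mul_le_mul_of_nonneg_left hω ht0.le
    linarith
  have hchern : ε * μ {ω | (B₁ ω : ℝ) + (B₂ ω : ℝ) - (B₃ ω : ℝ) ≤ θ} ≤ ∫⁻ ω, f ω ∂μ := by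
    calc ε * μ {ω | (B₁ ω : ℝ) + (B₂ ω : ℝ) - (B₃ ω : ℝ) ≤ θ}
        ≤ ε * μ {ω | ε ≤ f ω} := mul_le_mul_right (measure_mono hsub) ε
      _ ≤ ∫⁻ ω, f ω ∂μ := mul_meas_ge_le_lintegral₀ hfm.aemeasurable ε
  set M : ℝ := (1 - p₁ + p₁ * s) ^ m₁ * ((1 - q + q * s) ^ (m₃ - m₁) * (1 - q + q * s⁻¹) ^ m₃)
    with hMdef
  have hM0 : 0 ≤ M := by positivity
  have hle : μ {ω | (B₁ ω : ℝ) + (B₂ ω : ℝ) - (B₃ ω : ℝ) ≤ θ} ≤ ENNReal.ofReal M / ε := by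
    rw [ENNReal.le_div_iff_mul_le (Or.inl hε0) (Or.inl hεtop)]
    rw [mul_comm]
    calc ε * μ {ω | (B₁ ω : ℝ) + (B₂ ω : ℝ) - (B₃ ω : ℝ) ≤ θ} ≤ ∫⁻ ω, f ω ∂μ := hchern
      _ = ENNReal.ofReal M := by
          rw [hint, hMdef, ENNReal.ofReal_mul (by positivity), ENNReal.ofReal_mul (by positivity)]
  refine le_trans hle ?_
  rw [hεdef, ← ENNReal.ofReal_div_of_pos (Real.exp_pos _)]
  apply ENNReal.ofReal_le_ofReal
  rw [Real.exp_neg, div_inv_eq_mul]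
  calc M * Real.exp (t * θ)
      ≤ Real.exp (-((m₃:ℝ)/n * (Real.sqrt aT - Real.sqrt b) ^ 2)) * Real.exp (t * θ) :=
        mul_le_mul_of_nonneg_right MAIN (Real.exp_pos _).le
    _ = Real.exp (-((m₃:ℝ)/n * (Real.sqrt aT - Real.sqrt b) ^ 2) + θ / 2 * Real.log R) := by
        rw [← Real.exp_add]
        congr 1
        rw [htdef]
        ring
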